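/- arXiv:2203.02709 — 6 statements merged into one kernel-verified Lean document; each statement's English description precedes it below -/
import Mathlib

section
/- For any ε > 0, if the subsample size satisfies n_s ≥ α_0 log(ε/K), where α_0 = (log(n − n_min) − log n)^{-1}, then the event e* (every one of the K latent clusters has at least one merchant in the subsample) happens with probability at least 1 − ε. -/
open Finset

/-- Probability, under simple random sampling without replacement of a size-`ns` subset of
the `n` merchants (uniform over all such subsets), of an event `E` about the sampled set. -/
noncomputable def srsProb (n ns : ℕ) (E : Finset (Fin n) → Prop) : ℝ :=
  ((@Finset.filter _ (fun s => E s) (Classical.decPred _)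
      (Finset.powersetCard ns (Finset.univ : Finset (Fin n)))).card : ℝ) /
    ((Finset.powersetCard ns (Finset.univ : Finset (Fin n))).card : ℝ)

/-- Size of cluster `k` among the `n` merchants with labels `γ`. -/
noncomputable def clusterSize {n K : ℕ} (γ : Fin n → Fin K) (k : Fin K) : ℕ :=
  (Finset.univ.filter fun i => γ i = k).card

/-- Minimal cluster size `n_min = min_k n*_k`. -/
noncomputable def nMin {n K : ℕ} (γ : Fin n → Fin K) : ℕ := ⨅ k, clusterSize γ k

lemma pow_mul_choose_le' {m n : ℕ} (h : m ≤ n) : ∀ s, n ^ s * m.choose s ≤ m ^ s * n.choose s := by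
  intro s
  induction s with
  | zero => simp
  | succ s ih =>
    have key : n * (m - s) ≤ m * (n - s) := by
      rcases le_or_gt m s with hs | hs
      · simp [Nat.sub_eq_zero_of_le hs]
      · have hsn : s ≤ n := le_trans hs.le h
        zify [hs.le, hsn]
        nlinarith [hs.le, hsn, h]
    have h1 : n ^ (s+1) * m.choose (s+1) * (s+1) = (n * (m - s)) * (n ^ s * m.choose s) := by
      rw [mul_assoc, Nat.choose_succ_right_eq]; ring
    have h2 : m ^ (s+1) * n.choose (s+1) * (s+1) = (m * (n - s)) * (m ^ s * n.choose s) := by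
      rw [mul_assoc, Nat.choose_succ_right_eq]; ring
    have h3 : n ^ (s+1) * m.choose (s+1) * (s+1) ≤ m ^ (s+1) * n.choose (s+1) * (s+1) := by
      rw [h1, h2]; exact Nat.mul_le_mul key ih
    exact Nat.le_of_mul_le_mul_right h3 (Nat.succ_pos s)

/-- for any `ε > 0`, if the subsample size satisfies
`n_s ≥ α₀ log(ε/K)` with `α₀ = (log(n − n_min) − log n)⁻¹`, then the event `e*`
(every one of the `K` clusters has at least one merchant in the subsample) happens
with probability at least `1 − ε` under simple random sampling without replacement. -/
theorem srs_cover_prob_of_size {n K ns : ℕ} (hK : 0 < K) (hns : ns ≤ n)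
    (γ : Fin n → Fin K) (hsurj : Function.Surjective γ)
    (hmin : nMin γ < n)
    (ε : ℝ) (hε : 0 < ε)
    (hsize : (Real.log ((n : ℝ) - (nMin γ : ℝ)) - Real.log (n : ℝ))⁻¹ *
        Real.log (ε / (K : ℝ)) ≤ (ns : ℝ)) :
    1 - ε ≤ srsProb n ns (fun s => ∀ k : Fin K, ∃ i ∈ s, γ i = k) := by
  classical
  haveI : Nonempty (Fin K) := ⟨⟨0, hK⟩⟩
  set m := nMin γ with hm
  have hmle : ∀ k, m ≤ clusterSize γ k := fun k => ciInf_le (OrderBot.bddBelow _) k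
  have hm1 : 1 ≤ m := le_ciInf fun k => by
    obtain ⟨i, hi⟩ := hsurj k
    have hmem : i ∈ univ.filter (fun i => γ i = k) := by simp [hi]
    exact Nat.one_le_iff_ne_zero.mpr (Finset.card_ne_zero_of_mem hmem)
  -- complement sets
  set A : Fin K → Finset (Fin n) := fun k => univ.filter (fun i => γ i ≠ k) with hA
  have hAcard : ∀ k, (A k).card = n - clusterSize γ k := by
    intro k
    have h2 := Finset.card_filter_add_card_filter_not (s := (univ : Finset (Fin n)))
      (p := fun i => γ i = k)
    simp only [Finset.card_univ, Fintype.card_fin] at h2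
    simp only [hA, clusterSize, Ne]
    omega
  set P := Finset.powersetCard ns (univ : Finset (Fin n)) with hP
  have hPcard : P.card = n.choose ns := by simp [hP, Finset.card_powersetCard]
  have hsub : ∀ k, P.filter (fun s => s ⊆ A k) = Finset.powersetCard ns (A k) := by
    intro k
    ext s
    simp [hP, Finset.mem_powersetCard, Finset.mem_filter]
    tauto
  -- bad set
  set B := P.filter (fun s => ¬ ∀ k : Fin K, ∃ i ∈ s, γ i = k) with hB
  have hBsub : B ⊆ (univ : Finset (Fin K)).biUnion (fun k => P.filter (fun s => s ⊆ A k)) := by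
    intro s hs
    simp only [hB, Finset.mem_filter, not_forall] at hs
    obtain ⟨hsP, k, hk⟩ := hs
    push_neg at hk
    refine Finset.mem_biUnion.mpr ⟨k, Finset.mem_univ k, Finset.mem_filter.mpr ⟨hsP, ?_⟩⟩
    intro i hi
    simp [hA, hk i hi]
  have hBcard : B.card ≤ K * (n - m).choose ns := by
    calc B.card ≤ ∑ k : Fin K, (P.filter (fun s => s ⊆ A k)).card :=
          le_trans (Finset.card_le_card hBsub) (Finset.card_biUnion_le)
      _ ≤ ∑ k : Fin K, (n - m).choose ns := by
          refine Finset.sum_le_sum fun k _ => ?_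
          rw [hsub k, Finset.card_powersetCard, hAcard k]
          exact Nat.choose_le_choose ns (by have := hmle k; omega)
      _ = K * (n - m).choose ns := by simp [mul_comm]
  -- good set
  set G := P.filter (fun s => ∀ k : Fin K, ∃ i ∈ s, γ i = k) with hG
  have hGB : G.card + B.card = P.card :=
    Finset.card_filter_add_card_filter_not (p := fun s => ∀ k : Fin K, ∃ i ∈ s, γ i = k)
  -- real quantities
  have hnm1 : 1 ≤ n - m := by omega
  have hn2 : 2 ≤ n := by omega
  have hTpos : 0 < n.choose ns := Nat.choose_pos hns
  have hnpos : (0:ℝ) < (n:ℝ) := by positivity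
  have hcast : ((n:ℝ) - (m:ℝ)) = ((n - m : ℕ):ℝ) := by
    rw [Nat.cast_sub hmin.le]
  set r : ℝ := ((n - m : ℕ):ℝ) / (n:ℝ) with hr
  have hnmpos : (0:ℝ) < ((n - m : ℕ):ℝ) := by exact_mod_cast hnm1
  have hnmlt : ((n - m : ℕ):ℝ) < (n:ℝ) := by
    have : n - m < n := by omega
    exact_mod_cast this
  have hrpos : 0 < r := div_pos hnmpos hnpos
  have hKpos : (0:ℝ) < (K:ℝ) := by exact_mod_cast hK
  -- log manipulation
  set L : ℝ := Real.log ((n:ℝ) - (m:ℝ)) - Real.log (n:ℝ) with hL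
  have hLr : L = Real.log r := by
    rw [hL, hcast, hr, Real.log_div (ne_of_gt hnmpos) (ne_of_gt hnpos)]
  have hLneg : L < 0 := by
    rw [hL, hcast, sub_neg]
    exact Real.log_lt_log hnmpos hnmlt
  have hns' : (ns:ℝ) * L ≤ Real.log (ε / (K:ℝ)) := by
    have h4 := mul_le_mul_of_nonpos_right hsize hLneg.le
    have hL0 : L ≠ 0 := ne_of_lt hLneg
    have h5 : (L⁻¹ * Real.log (ε / (K:ℝ))) * L = Real.log (ε / (K:ℝ)) := by
      field_simp
    rw [h5] at h4
    exact h4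
  have hpow : r ^ ns ≤ ε / (K:ℝ) := by
    have h6 : Real.log (r ^ ns) ≤ Real.log (ε / (K:ℝ)) := by
      rw [Real.log_pow]
      rw [hLr] at hns'
      exact hns'
    exact (Real.log_le_log_iff (pow_pos hrpos ns) (div_pos hε hKpos)).mp h6
  have hKr : (K:ℝ) * r ^ ns ≤ ε := by
    calc (K:ℝ) * r ^ ns ≤ (K:ℝ) * (ε / (K:ℝ)) :=
          mul_le_mul_of_nonneg_left hpow hKpos.le
      _ = ε := by field_simp
  -- choose ratio bound
  have hchoose : ((n - m).choose ns : ℝ) ≤ r ^ ns * (n.choose ns : ℝ) := by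
    have h7 := pow_mul_choose_le' (Nat.sub_le n m) ns
    have h8 : ((n:ℝ)) ^ ns * ((n - m).choose ns : ℝ) ≤ ((n - m : ℕ):ℝ) ^ ns * (n.choose ns : ℝ) := by
      exact_mod_cast h7
    have hnp : (0:ℝ) < (n:ℝ) ^ ns := pow_pos hnpos ns
    rw [hr, div_pow, div_mul_eq_mul_div, le_div_iff₀ hnp]
    calc ((n - m).choose ns : ℝ) * (n:ℝ) ^ ns
        = (n:ℝ) ^ ns * ((n - m).choose ns : ℝ) := by ring
      _ ≤ ((n - m : ℕ):ℝ) ^ ns * (n.choose ns : ℝ) := h8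
  -- bad probability small
  have hBsmall : (B.card : ℝ) ≤ ε * (n.choose ns : ℝ) := by
    calc (B.card : ℝ) ≤ (K:ℝ) * ((n - m).choose ns : ℝ) := by exact_mod_cast hBcard
      _ ≤ (K:ℝ) * (r ^ ns * (n.choose ns : ℝ)) := mul_le_mul_of_nonneg_left hchoose hKpos.le
      _ = ((K:ℝ) * r ^ ns) * (n.choose ns : ℝ) := by ring
      _ ≤ ε * (n.choose ns : ℝ) := by
          apply mul_le_mul_of_nonneg_right hKr
          positivity
  -- conclude
  have hTposR : (0:ℝ) < (n.choose ns : ℝ) := by exact_mod_cast hTpos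
  have hGcard : (G.card : ℝ) = (n.choose ns : ℝ) - (B.card : ℝ) := by
    have : G.card + B.card = n.choose ns := by rw [hGB, hPcard]
    have := congrArg (fun x : ℕ => (x:ℝ)) this
    push_cast at this
    linarith
  have hfinal : 1 - ε ≤ (G.card : ℝ) / (n.choose ns : ℝ) := by
    rw [hGcard, sub_div, div_self (ne_of_gt hTposR)]
    have : (B.card : ℝ) / (n.choose ns : ℝ) ≤ ε := by
      rw [div_le_iff₀ hTposR]
      exact hBsmall
    linarith
  unfold srsProb
  simp only [Finset.filter_congr_decidable]
  rw [← hP, hPcard]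
  convert hfinal using 4
end

section
/- (Required subsample size.) If the subsample size satisfies n_s ≥ α (log n + log K), where α = −(log(1 − n_min/n))^{-1}, then the event e* (every one of the K latent clusters has at least one merchant in the subsample) happens with probability at least 1 − n^{-1}. -/
open Finset

lemma key_nat (n m ns : ℕ) :
    (n - m).choose ns * n ^ ns ≤ n.choose ns * (n - m) ^ ns := by
  have h : (n - m).descFactorial ns * n ^ ns ≤ n.descFactorial ns * (n - m) ^ ns := by
    have e1 : n ^ ns = ∏ _i ∈ range ns, n := by simp
    have e2 : (n - m) ^ ns = ∏ _i ∈ range ns, (n - m) := by simp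
    rw [Nat.descFactorial_eq_prod_range, Nat.descFactorial_eq_prod_range, e1, e2,
      ← Finset.prod_mul_distrib, ← Finset.prod_mul_distrib]
    apply Finset.prod_le_prod'
    intro i _
    rcases le_or_gt m n with hmn | hmn
    · rcases le_or_gt i (n - m) with h | h
      · have hin : i ≤ n := le_trans h (Nat.sub_le n m)
        zify [h, hmn, hin]
        nlinarith [Int.natCast_nonneg i, Int.natCast_nonneg m]
      · rw [Nat.sub_eq_zero_of_le h.le, Nat.zero_mul]; exact Nat.zero_le _
    · rw [Nat.sub_eq_zero_of_le hmn.le]; simp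
  rw [Nat.descFactorial_eq_factorial_mul_choose, Nat.descFactorial_eq_factorial_mul_choose,
    Nat.mul_assoc, Nat.mul_assoc] at h
  exact Nat.le_of_mul_le_mul_left h (Nat.factorial_pos ns)


/-- required subsample size: if the subsample size satisfies
`n_s ≥ α (log n + log K)` with `α = −(log(1 − n_min/n))⁻¹`, then the event `e*`
(every one of the `K` clusters has at least one merchant in the subsample) happens with
probability at least `1 − n⁻¹` under simple random sampling without replacement. -/
theorem srs_cover_prob_required_size {n K ns : ℕ} (hK : 0 < K) (hns : ns ≤ n)
    (γ : Fin n → Fin K) (hsurj : Function.Surjective γ)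
    (hmin : nMin γ < n)
    (hsize : -(Real.log (1 - (nMin γ : ℝ) / (n : ℝ)))⁻¹ *
        (Real.log (n : ℝ) + Real.log (K : ℝ)) ≤ (ns : ℝ)) :
    1 - (n : ℝ)⁻¹ ≤ srsProb n ns (fun s => ∀ k : Fin K, ∃ i ∈ s, γ i = k) := by
  classical
  set m := nMin γ with hm
  haveI : Nonempty (Fin K) := ⟨⟨0, hK⟩⟩
  -- basic facts about m
  have hmle : ∀ k, m ≤ clusterSize γ k := fun k => ciInf_le (OrderBot.bddBelow _) k
  have hm1 : 1 ≤ m := by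
    apply le_ciInf
    intro k
    obtain ⟨i, hi⟩ := hsurj k
    have : i ∈ Finset.univ.filter fun j => γ j = k := by simp [hi]
    exact Nat.one_le_iff_ne_zero.mpr (Finset.card_ne_zero_of_mem this)
  have hn0 : 0 < n := lt_of_le_of_lt (Nat.zero_le m) hmin
  have hn2 : 2 ≤ n := by omega
  -- counting
  set S := Finset.powersetCard ns (Finset.univ : Finset (Fin n)) with hS
  have hScard : S.card = n.choose ns := by
    rw [hS, Finset.card_powersetCard, Finset.card_univ, Fintype.card_fin]
  have hSpos : 0 < S.card := by rw [hScard]; exact Nat.choose_pos hns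
  set E : Finset (Fin n) → Prop := fun s => ∀ k : Fin K, ∃ i ∈ s, γ i = k with hE
  -- bad sets
  have hbadcard : ∀ k : Fin K,
      (S.filter (fun s => ∀ i ∈ s, γ i ≠ k)).card = (n - clusterSize γ k).choose ns := by
    intro k
    have heq : S.filter (fun s => ∀ i ∈ s, γ i ≠ k)
        = Finset.powersetCard ns (Finset.univ.filter fun i => γ i ≠ k) := by
      ext s
      simp only [hS, Finset.mem_filter, Finset.mem_powersetCard, Finset.subset_iff,
        Finset.mem_univ, true_and]
      tauto
    rw [heq, Finset.card_powersetCard]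
    congr 1
    have : (Finset.univ.filter fun i => γ i ≠ k)
        = Finset.univ \ (Finset.univ.filter fun i => γ i = k) := by
      rw [← Finset.filter_not]
    rw [this, Finset.card_sdiff_of_subset (Finset.filter_subset _ _), Finset.card_univ, Fintype.card_fin]
    rfl
  have hsub : S.filter (fun s => ¬ E s) ⊆
      Finset.univ.biUnion (fun k : Fin K => S.filter (fun s => ∀ i ∈ s, γ i ≠ k)) := by
    intro s hs
    rw [Finset.mem_filter] at hs
    obtain ⟨hsS, hsE⟩ := hs
    rw [hE] at hsE
    obtain ⟨k, hk⟩ := not_forall.mp hsE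
    push_neg at hk
    refine Finset.mem_biUnion.mpr ⟨k, Finset.mem_univ k, Finset.mem_filter.mpr ⟨hsS, ?_⟩⟩
    intro i hi
    exact hk i hi
  have hBle : (S.filter (fun s => ¬ E s)).card ≤ K * (n - m).choose ns := by
    calc (S.filter (fun s => ¬ E s)).card
        ≤ ∑ k : Fin K, (S.filter (fun s => ∀ i ∈ s, γ i ≠ k)).card :=
          le_trans (Finset.card_le_card hsub) (Finset.card_biUnion_le)
      _ ≤ ∑ _k : Fin K, (n - m).choose ns := by
          apply Finset.sum_le_sum
          intro k _
          rw [hbadcard k]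
          exact Nat.choose_le_choose ns (Nat.sub_le_sub_left (hmle k) n)
      _ = K * (n - m).choose ns := by simp [Finset.sum_const, mul_comm]
  -- probability as 1 - bad/total
  have hsplit : (S.filter E).card + (S.filter (fun s => ¬ E s)).card = S.card :=
    Finset.card_filter_add_card_filter_not (fun s => E s)
  have hprob : srsProb n ns E = 1 - ((S.filter (fun s => ¬ E s)).card : ℝ) / (S.card : ℝ) := by
    have hSne : (S.card : ℝ) ≠ 0 := Nat.cast_ne_zero.mpr hSpos.ne'
    have hcard : ((S.filter E).card : ℝ) = (S.card : ℝ) - ((S.filter (fun s => ¬ E s)).card : ℝ) := by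
      rw [← hsplit]; push_cast; ring
    rw [srsProb, Finset.filter_congr_decidable]
    show ((S.filter E).card : ℝ) / (S.card : ℝ) = _
    rw [hcard, sub_div, div_self hSne]
  rw [hprob]
  -- analytic bounds
  have hmlen : m ≤ n := hmin.le
  have hnR : (0:ℝ) < n := Nat.cast_pos.mpr hn0
  have hKR : (0:ℝ) < K := Nat.cast_pos.mpr hK
  set x : ℝ := 1 - (m : ℝ) / (n : ℝ) with hx
  have hxeq : x = ((n - m : ℕ) : ℝ) / (n : ℝ) := by
    rw [hx, Nat.cast_sub hmlen]
    field_simp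
  have hx0 : 0 < x := by
    rw [hx]
    have : (m : ℝ) / n < 1 := (div_lt_one hnR).mpr (by exact_mod_cast hmin)
    linarith
  have hx1 : x < 1 := by
    rw [hx]
    have : (0:ℝ) < (m : ℝ) / n := div_pos (by exact_mod_cast hm1) hnR
    linarith
  have hlogx : Real.log x < 0 := Real.log_neg hx0 hx1
  set t : ℝ := -Real.log x with ht
  have ht0 : 0 < t := by rw [ht]; linarith
  have hL : Real.log n + Real.log K ≤ t * ns := by
    have h1 : -(Real.log x)⁻¹ = t⁻¹ := by rw [ht, inv_neg]
    rw [h1] at hsize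
    calc Real.log n + Real.log K = t * (t⁻¹ * (Real.log n + Real.log K)) := by
          field_simp
      _ ≤ t * ns := by
          apply mul_le_mul_of_nonneg_left hsize ht0.le
  have hxns : x ^ ns ≤ ((n : ℝ) * K)⁻¹ := by
    have h1 : x ^ ns = Real.exp (Real.log x * ns) := by
      rw [Real.exp_mul, Real.exp_log hx0]
      norm_num
    rw [h1]
    have h2 : Real.exp (Real.log x * ns) ≤ Real.exp (-(Real.log n + Real.log K)) := by
      apply Real.exp_le_exp.mpr
      have : Real.log x * ns = -(t * ns) := by rw [ht]; ring
      rw [this]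
      linarith
    refine le_trans h2 ?_
    rw [Real.exp_neg, Real.exp_add, Real.exp_log hnR, Real.exp_log hKR]
  -- ratio bound
  have hchoose_pos : (0:ℝ) < (n.choose ns : ℝ) := Nat.cast_pos.mpr (Nat.choose_pos hns)
  have hratio : ((n - m).choose ns : ℝ) / (n.choose ns : ℝ) ≤ x ^ ns := by
    rw [hxeq, div_pow]
    rw [div_le_div_iff₀ hchoose_pos (by positivity)]
    exact_mod_cast le_of_le_of_eq (key_nat n m ns) (mul_comm _ _)
  -- combine
  have hBreal : ((S.filter (fun s => ¬ E s)).card : ℝ) / (S.card : ℝ) ≤ (n : ℝ)⁻¹ := by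
    rw [hScard]
    calc ((S.filter (fun s => ¬ E s)).card : ℝ) / (n.choose ns : ℝ)
        ≤ (K * (n - m).choose ns : ℝ) / (n.choose ns : ℝ) := by
          apply div_le_div_of_nonneg_right ?_ hchoose_pos.le
          exact_mod_cast hBle
      _ = (K : ℝ) * (((n - m).choose ns : ℝ) / (n.choose ns : ℝ)) := by ring
      _ ≤ (K : ℝ) * (x ^ ns) := by
          apply mul_le_mul_of_nonneg_left hratio hKR.le
      _ ≤ (K : ℝ) * ((n : ℝ) * K)⁻¹ := mul_le_mul_of_nonneg_left hxns hKR.le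
      _ = (n : ℝ)⁻¹ := by
          rw [mul_inv, ← mul_assoc, mul_comm (K:ℝ) ((n:ℝ)⁻¹), mul_assoc,
            mul_inv_cancel₀ hKR.ne', mul_one]
  linarith
end

section
/- Let W be a real random variable with 0 ≤ W ≤ 1 almost surely. Then Var(e^{-W}) ≤ E[W²] + Var(W). -/
open MeasureTheory ProbabilityTheory

lemma exp_neg_le_quad {x : ℝ} (hx : 0 ≤ x) : Real.exp (-x) ≤ 1 - x + x ^ 2 / 2 := by
  have h1 : 1 + x + x ^ 2 / 2 ≤ Real.exp x := Real.quadratic_le_exp_of_nonneg hx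
  have h2 : Real.exp (-x) * Real.exp x = 1 := by rw [← Real.exp_add]; simp
  nlinarith [Real.exp_pos x, Real.exp_pos (-x)]

/-- if `W` is a real random variable with `0 ≤ W ≤ 1` almost surely, then
`Var(e^{-W}) ≤ E[W²] + Var(W)`. -/
theorem variance_exp_neg_le (Ω : Type*) [MeasurableSpace Ω] (μ : Measure Ω)
    [IsProbabilityMeasure μ] (W : Ω → ℝ) (hW : Measurable W)
    (hrange : ∀ᵐ ω ∂μ, W ω ∈ Set.Icc (0 : ℝ) 1) :
    variance (fun ω => Real.exp (-(W ω))) μ ≤ (∫ ω, (W ω) ^ 2 ∂μ) + variance W μ := by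
  set E : Ω → ℝ := fun ω => Real.exp (-(W ω)) with hE
  have hWbd : ∀ᵐ ω ∂μ, ‖W ω‖ ≤ 1 := by
    filter_upwards [hrange] with ω hω
    rw [Real.norm_eq_abs, abs_le]; exact ⟨by linarith [hω.1], hω.2⟩
  have hEbd : ∀ᵐ ω ∂μ, ‖E ω‖ ≤ 1 := by
    filter_upwards [hrange] with ω hω
    rw [Real.norm_eq_abs, abs_le]
    constructor
    · linarith [(Real.exp_pos (-(W ω))).le]
    · calc Real.exp (-(W ω)) ≤ Real.exp 0 := Real.exp_le_exp.2 (by linarith [hω.1])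
        _ = 1 := Real.exp_zero
  have hEm : Measurable E := (hW.neg).exp
  have hWmem : MemLp W 2 μ := MemLp.of_bound hW.aestronglyMeasurable 1 hWbd
  have hEmem : MemLp E 2 μ := MemLp.of_bound hEm.aestronglyMeasurable 1 hEbd
  have hWint : Integrable W μ := hWmem.integrable one_le_two
  have hW2int : Integrable (fun ω => W ω ^ 2) μ := hWmem.integrable_sq
  have hEint : Integrable E μ := hEmem.integrable one_le_two
  have hE2int : Integrable (fun ω => E ω ^ 2) μ := hEmem.integrable_sq
  -- notation
  set m : ℝ := ∫ ω, W ω ∂μ with hm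
  set s : ℝ := ∫ ω, W ω ^ 2 ∂μ with hs
  have hvarW : variance W μ = s - m ^ 2 := by
    rw [variance_eq_sub hWmem]; simp [hs, hm]
  have hvarE : variance E μ = (∫ ω, E ω ^ 2 ∂μ) - (∫ ω, E ω ∂μ) ^ 2 := by
    rw [variance_eq_sub hEmem]; simp
  -- E[W] ∈ [0,1]
  have hm0 : 0 ≤ m := integral_nonneg_of_ae (by filter_upwards [hrange] with ω hω using hω.1)
  have hm1 : m ≤ 1 := by
    have := integral_mono_ae hWint (integrable_const 1)
      (by filter_upwards [hrange] with ω hω using hω.2)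
    simpa using this
  -- lower bound on ∫ E
  have hsubint : Integrable (fun ω => 1 - W ω) μ := (integrable_const 1).sub hWint
  have hElo : 1 - m ≤ ∫ ω, E ω ∂μ := by
    have h := integral_mono_ae hsubint hEint
      (by filter_upwards [hrange] with ω hω
          have := Real.add_one_le_exp (-(W ω))
          simp only [E]; linarith)
    have heq : ∫ ω, (1 - W ω) ∂μ = 1 - m := by
      rw [integral_sub (integrable_const 1) hWint]; simp [hm]
    linarith [heq ▸ h]
  have hE0 : 0 ≤ ∫ ω, E ω ∂μ :=
    integral_nonneg_of_ae (Filter.Eventually.of_forall fun ω => (Real.exp_pos _).le)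
  have hEsq : (1 - m) ^ 2 ≤ (∫ ω, E ω ∂μ) ^ 2 := by
    rcases le_or_gt (1 - m) 0 with h | h
    · nlinarith
    · exact pow_le_pow_left₀ h.le hElo 2
  -- upper bound on ∫ E²
  have hg2int : Integrable (fun ω => 1 - 2 * W ω + 2 * W ω ^ 2) μ :=
    ((integrable_const (1:ℝ)).sub (hWint.const_mul 2)).add (hW2int.const_mul 2)
  have hE2up : ∫ ω, E ω ^ 2 ∂μ ≤ 1 - 2 * m + 2 * s := by
    have h := integral_mono_ae hE2int hg2int
      (by
        filter_upwards [hrange] with ω hω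
        have key : Real.exp (-(2 * W ω)) ≤ 1 - 2 * W ω + (2 * W ω) ^ 2 / 2 :=
          exp_neg_le_quad (by linarith [hω.1])
        have hsq : E ω ^ 2 = Real.exp (-(2 * W ω)) := by
          simp only [E, ← Real.exp_nat_mul]; ring_nf
        rw [hsq]; nlinarith)
    have hA : Integrable (fun ω => 1 - 2 * W ω) μ := (integrable_const 1).sub (hWint.const_mul 2)
    have hB : Integrable (fun ω => 2 * W ω ^ 2) μ := hW2int.const_mul 2
    have heq : ∫ ω, (1 - 2 * W ω + 2 * W ω ^ 2) ∂μ = 1 - 2 * m + 2 * s := by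
      rw [integral_add hA hB, integral_sub (integrable_const 1) (hWint.const_mul 2),
        MeasureTheory.integral_const_mul, MeasureTheory.integral_const_mul]
      simp [hm, hs]
    linarith [heq ▸ h]
  rw [hvarE, hvarW]
  nlinarith
end

section
/- Let S ∈ ℝ^{n×n} be a symmetric matrix with nonnegative entries, and let D, D* ∈ ℝ^{n×n} be diagonal matrices with strictly positive diagonal entries d_1,…,d_n and d*_1,…,d*_n. Set L = D^{-1/2} S D^{-1/2} and L̃ = (D*)^{-1/2} S (D*)^{-1/2}. If the spectral norm of L satisfies ‖L‖ ≤ 1 and max_{1≤i≤n} |d_i/d*_i − 1| ≤ b for some b ≥ 0, then ‖L − L̃‖ ≤ b² + 2b (spectral norm). -/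
open Matrix
open scoped Matrix.Norms.L2Operator

/-- The spectral norm (ℓ²→ℓ² operator norm) of a real square matrix. -/
noncomputable def specNorm {n : ℕ} (A : Matrix (Fin n) (Fin n) ℝ) : ℝ :=
  ‖LinearMap.toContinuousLinearMap (Matrix.toEuclideanLin A)‖

lemma specNorm_eq_l2 {n : ℕ} (A : Matrix (Fin n) (Fin n) ℝ) : specNorm A = ‖A‖ := rfl

lemma l2norm_diagonal_le {n : ℕ} (v : Fin n → ℝ) (c : ℝ) (hc : 0 ≤ c)
    (h : ∀ i, |v i| ≤ c) : ‖(diagonal v : Matrix (Fin n) (Fin n) ℝ)‖ ≤ c := by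
  rw [Matrix.l2_opNorm_def]
  apply ContinuousLinearMap.opNorm_le_bound _ hc
  intro x
  simp only [LinearEquiv.trans_apply, LinearMap.coe_toContinuousLinearMap']
  rw [toEuclideanLin_apply]
  rw [EuclideanSpace.norm_eq, EuclideanSpace.norm_eq]
  have key : ∀ i, ‖(WithLp.equiv 2 (Fin n → ℝ)).symm
      ((diagonal v) *ᵥ (WithLp.equiv 2 (Fin n → ℝ)) x) i‖ ^ 2 ≤ c ^ 2 * ‖x i‖ ^ 2 := by
    intro i
    have : (WithLp.equiv 2 (Fin n → ℝ)).symm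
        ((diagonal v) *ᵥ (WithLp.equiv 2 (Fin n → ℝ)) x) i = v i * x i := by
      simp [mulVec_diagonal]
    rw [this]
    have h1 := h i
    have h2 := abs_nonneg (v i)
    rw [Real.norm_eq_abs, Real.norm_eq_abs, abs_mul]
    rw [mul_pow]
    have : |v i| ^ 2 ≤ c ^ 2 := by nlinarith
    nlinarith [sq_nonneg (|x i|), sq_nonneg (x i), abs_nonneg (x i)]
  calc Real.sqrt (∑ i, ‖(WithLp.equiv 2 (Fin n → ℝ)).symm
        ((diagonal v) *ᵥ (WithLp.equiv 2 (Fin n → ℝ)) x) i‖ ^ 2)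
      ≤ Real.sqrt (∑ i, c ^ 2 * ‖x i‖ ^ 2) :=
        Real.sqrt_le_sqrt (Finset.sum_le_sum fun i _ => key i)
    _ = c * Real.sqrt (∑ i, ‖x i‖ ^ 2) := by
        rw [← Finset.mul_sum, Real.sqrt_mul (by positivity), Real.sqrt_sq hc]

/-- for a symmetric nonnegative `S` and positive diagonal matrices `D`, `D*`,
with `L = D^{-1/2} S D^{-1/2}` and `L̃ = (D*)^{-1/2} S (D*)^{-1/2}`, if `‖L‖ ≤ 1` and
`max_i |d_i/d*_i − 1| ≤ b`, then `‖L − L̃‖ ≤ b² + 2b` in spectral norm. -/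
theorem laplacian_perturbation_bound {n : ℕ}
    (S : Matrix (Fin n) (Fin n) ℝ) (hSsymm : S.IsSymm) (hSnonneg : ∀ i j, 0 ≤ S i j)
    (d dstar : Fin n → ℝ) (hd : ∀ i, 0 < d i) (hdstar : ∀ i, 0 < dstar i)
    (L Ltil : Matrix (Fin n) (Fin n) ℝ)
    (hL : L = Matrix.diagonal (fun i => (Real.sqrt (d i))⁻¹) * S *
      Matrix.diagonal (fun i => (Real.sqrt (d i))⁻¹))
    (hLtil : Ltil = Matrix.diagonal (fun i => (Real.sqrt (dstar i))⁻¹) * S *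
      Matrix.diagonal (fun i => (Real.sqrt (dstar i))⁻¹))
    (hLnorm : specNorm L ≤ 1)
    (b : ℝ) (hb : 0 ≤ b) (hratio : ∀ i, |d i / dstar i - 1| ≤ b) :
    specNorm (L - Ltil) ≤ b ^ 2 + 2 * b := by
  rw [specNorm_eq_l2] at *
  set e : Fin n → ℝ := fun i => Real.sqrt (d i / dstar i) with he
  set E : Matrix (Fin n) (Fin n) ℝ := diagonal e with hE
  -- Ltil = E * L * E
  have key : ∀ i, e i * (Real.sqrt (d i))⁻¹ = (Real.sqrt (dstar i))⁻¹ := by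
    intro i
    have hdi : (0:ℝ) < Real.sqrt (d i) := Real.sqrt_pos.2 (hd i)
    have hdsi : (0:ℝ) < Real.sqrt (dstar i) := Real.sqrt_pos.2 (hdstar i)
    show Real.sqrt (d i / dstar i) * (Real.sqrt (d i))⁻¹ = (Real.sqrt (dstar i))⁻¹
    rw [Real.sqrt_div (le_of_lt (hd i))]
    field_simp
  have hEL : Ltil = E * L * E := by
    ext i j
    simp only [hE, hL, hLtil, Matrix.mul_diagonal, Matrix.diagonal_mul]
    rw [← key i, ← key j]
    ring
  -- key entrywise estimates
  have hediff : ∀ i, |1 - e i| ≤ b := by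
    intro i
    set r := d i / dstar i with hr
    have hrpos : 0 < r := div_pos (hd i) (hdstar i)
    have hs : Real.sqrt r ^ 2 = r := Real.sq_sqrt hrpos.le
    have hssn : 0 ≤ Real.sqrt r := Real.sqrt_nonneg r
    have habs : |Real.sqrt r - 1| * (Real.sqrt r + 1) = |r - 1| := by
      rw [← abs_of_nonneg (by linarith : (0:ℝ) ≤ Real.sqrt r + 1), ← abs_mul]
      congr 1
      nlinarith
    have h1 : |Real.sqrt r - 1| ≤ |r - 1| := by
      nlinarith [abs_nonneg (Real.sqrt r - 1)]
    have := hratio i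
    rw [abs_sub_comm]
    calc |e i - 1| = |Real.sqrt r - 1| := rfl
      _ ≤ |r - 1| := h1
      _ ≤ b := by rw [hr]; exact this
  have hebound : ∀ i, |e i| ≤ 1 + b := by
    intro i
    have h1 := hediff i
    have h2 : 0 ≤ e i := Real.sqrt_nonneg _
    rw [abs_of_nonneg h2]
    cases' abs_le.1 h1 with hl hr
    linarith
  -- matrix norm bounds
  have hIE : ‖(1 : Matrix (Fin n) (Fin n) ℝ) - E‖ ≤ b := by
    have : (1 : Matrix (Fin n) (Fin n) ℝ) - E = diagonal (fun i => 1 - e i) := by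
      rw [hE, ← diagonal_one, diagonal_sub]
    rw [this]
    exact l2norm_diagonal_le _ b hb hediff
  have hEnorm : ‖E‖ ≤ 1 + b := l2norm_diagonal_le _ (1 + b) (by linarith) hebound
  -- decomposition
  have hdecomp : L - Ltil = L * (1 - E) + (1 - E) * (L * E) := by
    rw [hEL]; noncomm_ring
  have hLnn : (0:ℝ) ≤ ‖L‖ := norm_nonneg _
  have hIEnn : (0:ℝ) ≤ ‖(1 : Matrix (Fin n) (Fin n) ℝ) - E‖ := norm_nonneg _
  have hEnn : (0:ℝ) ≤ ‖E‖ := norm_nonneg _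
  calc ‖L - Ltil‖ = ‖L * (1 - E) + (1 - E) * (L * E)‖ := by rw [hdecomp]
    _ ≤ ‖L * (1 - E)‖ + ‖(1 - E) * (L * E)‖ := norm_add_le _ _
    _ ≤ ‖L‖ * ‖1 - E‖ + ‖1 - E‖ * (‖L‖ * ‖E‖) := by
        gcongr
        · exact norm_mul_le _ _
        · exact le_trans (norm_mul_le _ _) (by gcongr; exact norm_mul_le _ _)
    _ ≤ b ^ 2 + 2 * b := by
        nlinarith [mul_le_mul hLnorm hIE hIEnn zero_le_one,
          mul_le_mul hIE (mul_le_mul hLnorm hEnorm hEnn zero_le_one)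
            (mul_nonneg hLnn hEnn) hb]
end

section
/- Let G ∈ ℝ^{n×n} be diagonal with strictly positive entries g_1,…,g_n, let Z ∈ {0,1}^{n×K} be a membership matrix (each row has exactly one 1, each column nonzero) with cluster labels γ_i, and let V_0 ∈ ℝ^{K×K} be orthogonal. Define V = G Z (Z^T G² Z)^{-1/2} V_0 ∈ ℝ^{n×K} and g'_i = g_i². Then for any two indices i, j with γ_i ≠ γ_j, the rows of V satisfy ‖V_{i·} − V_{j·}‖ ≥ √( g'_i / Σ_{i': γ_{i'} = γ_i} g'_{i'} + g'_j / Σ_{i': γ_{i'} = γ_j} g'_{i'} ). -/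
open Matrix

/-- row separation for `V = G Z (Zᵀ G² Z)^{-1/2} V₀`, where `G` is a positive
diagonal matrix, `Z` is the membership matrix of the cluster labels `γ`, and `V₀` is
orthogonal.  Here `Zᵀ G² Z` is the diagonal `K×K` matrix with `k`-th entry
`Σ_{i : γ i = k} g_i²`, so its inverse square root is the diagonal matrix with entries
`(√(Σ_{i : γ i = k} g_i²))⁻¹`.  For indices `i, j` in different clusters,
`‖V_{i·} − V_{j·}‖ ≥ √( g'_i / Σ_{γ i' = γ i} g'_{i'} + g'_j / Σ_{γ i' = γ j} g'_{i'} )`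
with `g'_i = g_i²`. -/
theorem eigvec_row_separation {n K : ℕ}
    (g : Fin n → ℝ) (hg : ∀ i, 0 < g i)
    (γ : Fin n → Fin K) (hsurj : Function.Surjective γ)
    (Z : Matrix (Fin n) (Fin K) ℝ)
    (hZ : Z = Matrix.of fun i k => if γ i = k then (1 : ℝ) else 0)
    (V₀ : Matrix (Fin K) (Fin K) ℝ) (hV₀ : V₀ᵀ * V₀ = 1)
    (V : Matrix (Fin n) (Fin K) ℝ)
    (hV : V = Matrix.diagonal g * Z *
      Matrix.diagonal (fun k =>
        (Real.sqrt (∑ i ∈ Finset.univ.filter fun i' => γ i' = k, g i ^ 2))⁻¹) * V₀)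
    (i j : Fin n) (hij : γ i ≠ γ j) :
    Real.sqrt ((g i ^ 2) / (∑ i' ∈ Finset.univ.filter fun i' => γ i' = γ i, g i' ^ 2)
        + (g j ^ 2) / (∑ i' ∈ Finset.univ.filter fun i' => γ i' = γ j, g i' ^ 2))
      ≤ Real.sqrt (∑ k, (V i k - V j k) ^ 2) := by
  set S : Fin K → ℝ := fun c => ∑ i' ∈ Finset.univ.filter fun i' => γ i' = c, g i' ^ 2 with hS
  have hSpos : ∀ c, 0 < S c := by
    intro c
    obtain ⟨m, hm⟩ := hsurj c
    apply Finset.sum_pos'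
    · intro x _; positivity
    · exact ⟨m, Finset.mem_filter.mpr ⟨Finset.mem_univ m, hm⟩, pow_pos (hg m) 2⟩
  set d : Fin K → ℝ := fun c => (Real.sqrt (S c))⁻¹ with hd
  have hVik : ∀ (a : Fin n) (k : Fin K), V a k = g a * d (γ a) * V₀ (γ a) k := by
    intro a k
    rw [hV, hZ]
    simp only [Matrix.mul_apply, Matrix.diagonal_apply, Matrix.of_apply]
    simp only [ite_mul, mul_ite, zero_mul, mul_zero, one_mul, mul_one,
      Finset.sum_ite_eq, Finset.sum_ite_eq', Finset.mem_univ, if_true]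
    have h1 : ∀ x : Fin K,
        (∑ x_1 : Fin n, if γ x_1 = x then if a = x_1 then g a else 0 else 0)
          = if γ a = x then g a else 0 := by
      intro x
      rw [Finset.sum_eq_single a]
      · simp
      · intro b _ hb; simp [Ne.symm hb]
      · simp
    simp only [h1, ite_mul, zero_mul, Finset.sum_ite_eq' , Finset.sum_ite_eq,
      Finset.mem_univ, if_true]
  have hrow : V₀ * V₀ᵀ = 1 := mul_eq_one_comm.mp hV₀
  have hdot : ∀ c c', (∑ k, V₀ c k * V₀ c' k) = if c = c' then 1 else 0 := by
    intro c c'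
    have := congrFun (congrFun hrow c) c'
    simpa [Matrix.mul_apply, Matrix.one_apply, Matrix.transpose_apply] using this
  have hsum : (∑ k, (V i k - V j k) ^ 2)
      = (g i ^ 2) / S (γ i) + (g j ^ 2) / S (γ j) := by
    have expand : (∑ k, (V i k - V j k) ^ 2)
        = (g i * d (γ i))^2 * (∑ k, V₀ (γ i) k * V₀ (γ i) k)
          - 2 * (g i * d (γ i)) * (g j * d (γ j)) * (∑ k, V₀ (γ i) k * V₀ (γ j) k)
          + (g j * d (γ j))^2 * (∑ k, V₀ (γ j) k * V₀ (γ j) k) := by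
      simp only [hVik, Finset.mul_sum]
      rw [← Finset.sum_sub_distrib, ← Finset.sum_add_distrib]
      congr 1; funext k; ring
    rw [expand, hdot, hdot, hdot]
    simp only [if_pos rfl, if_neg hij]
    have h1 : (d (γ i))^2 = (S (γ i))⁻¹ := by
      simp [hd, inv_pow, Real.sq_sqrt (hSpos (γ i)).le]
    have h2 : (d (γ j))^2 = (S (γ j))⁻¹ := by
      simp [hd, inv_pow, Real.sq_sqrt (hSpos (γ j)).le]
    simp only [if_true, mul_one, mul_zero, sub_zero]
    rw [mul_pow, mul_pow, h1, h2, div_eq_mul_inv, div_eq_mul_inv]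
  rw [hsum]
end

section
/- Let F_i, F_j be CDFs of distributions on [0,1], let F̂_i, F̂_j be the ECDFs of independent i.i.d. samples of sizes v_i and v_j, and let S(i,j) = exp(−W(F̂_i, F̂_j)) with W(G,H) = ∫_0^1 |G − H|. Then |E[S(i,j)] − exp(−W(F_i, F_j))| ≤ E[W(F̂_i, F_i)] + E[W(F̂_j, F_j)] ≤ (2√v_i)^{-1} + (2√v_j)^{-1}; in particular, E[S(i,j)] → exp(−W(F_i, F_j)) as min(v_i, v_j) → ∞, and if F_i = F_j then E[S(i,j)] → 1. -/
open MeasureTheory ProbabilityTheory Filter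

/-- 1-Wasserstein distance between two CDFs of distributions on `[0,1]`:
`W(G, H) = ∫_0^1 |G(x) − H(x)| dx`. -/
noncomputable def wassCDF (G H : ℝ → ℝ) : ℝ := ∫ x in (0:ℝ)..1, |G x - H x|

/-- ECDF of the sample `X_0, …, X_{v-1}`. -/
noncomputable def ecdfSample {Ω : Type*} (v : ℕ) (X : Fin v → Ω → ℝ) (ω : Ω) (x : ℝ) : ℝ :=
  (∑ q, if X q ω ≤ x then (1 : ℝ) else 0) / (v : ℝ)

section Aux

lemma abs_exp_neg_sub_exp_neg {a b : ℝ} (ha : 0 ≤ a) (hb : 0 ≤ b) :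
    |Real.exp (-a) - Real.exp (-b)| ≤ |a - b| := by
  wlog h : b ≤ a generalizing a b
  · rw [abs_sub_comm, abs_sub_comm a b]; exact this hb ha (le_of_not_ge h)
  have h1 : Real.exp (-a) ≤ Real.exp (-b) := Real.exp_le_exp.2 (by linarith)
  rw [abs_of_nonpos (by linarith), abs_of_nonneg (by linarith)]
  have := Real.add_one_le_exp (b - a)
  have h2 : Real.exp (-b) ≤ 1 := Real.exp_le_one_iff.2 (by linarith)
  have h3 : Real.exp (-a) = Real.exp (-b) * Real.exp (b - a) := by
    rw [← Real.exp_add]; ring_nf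
  nlinarith [Real.exp_pos (-b), Real.exp_pos (b-a)]

lemma ecdf_nonneg {Ω : Type*} (v : ℕ) (X : Fin v → Ω → ℝ) (ω : Ω) (x : ℝ) :
    0 ≤ ecdfSample v X ω x := by
  unfold ecdfSample
  apply div_nonneg _ (Nat.cast_nonneg v)
  exact Finset.sum_nonneg fun q _ => by positivity

lemma ecdf_le_one {Ω : Type*} (v : ℕ) (X : Fin v → Ω → ℝ) (ω : Ω) (x : ℝ) :
    ecdfSample v X ω x ≤ 1 := by
  unfold ecdfSample
  rcases Nat.eq_zero_or_pos v with h | h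
  · subst h; simp
  rw [div_le_one (by positivity)]
  calc (∑ q, if X q ω ≤ x then (1:ℝ) else 0) ≤ ∑ _q : Fin v, (1:ℝ) :=
        Finset.sum_le_sum fun q _ => by split <;> norm_num
    _ = v := by simp

lemma measurable_ecdf_x {Ω : Type*} (v : ℕ) (X : Fin v → Ω → ℝ) (ω : Ω) :
    Measurable (ecdfSample v X ω) := by
  unfold ecdfSample
  apply Measurable.div_const
  apply Finset.measurable_sum
  intro q _
  have : (fun x => if X q ω ≤ x then (1:ℝ) else 0)
      = Set.indicator (Set.Ici (X q ω)) (fun _ => (1:ℝ)) := by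
    ext x; simp [Set.indicator, Set.mem_Ici]
  rw [this]
  exact (measurable_const).indicator measurableSet_Ici

lemma measurable_ecdf_joint {Ω : Type*} [MeasurableSpace Ω] (v : ℕ) (X : Fin v → Ω → ℝ)
    (hm : ∀ q, Measurable (X q)) :
    Measurable (fun p : Ω × ℝ => ecdfSample v X p.1 p.2) := by
  unfold ecdfSample
  apply Measurable.div_const
  apply Finset.measurable_sum
  intro q _
  have : MeasurableSet {p : Ω × ℝ | X q p.1 ≤ p.2} :=
    measurableSet_le ((hm q).comp measurable_fst) measurable_snd
  exact Measurable.ite this measurable_const measurable_const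

lemma intervalIntegrable_of_bounded {f : ℝ → ℝ} (hm : Measurable f) {C : ℝ}
    (hC : ∀ x, |f x| ≤ C) : IntervalIntegrable f volume 0 1 := by
  apply IntervalIntegrable.mono_fun' (g := fun _ => C)
  · exact intervalIntegrable_const
  · exact hm.aestronglyMeasurable
  · exact Filter.Eventually.of_forall fun x => by simpa using hC x

lemma wass_nonneg (G H : ℝ → ℝ) : 0 ≤ wassCDF G H := by
  unfold wassCDF
  apply intervalIntegral.integral_nonneg (by norm_num)
  intro x _; exact abs_nonneg _

lemma wass_le_one {G H : ℝ → ℝ} (hG : Measurable G) (hH : Measurable H)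
    (hG0 : ∀ x, 0 ≤ G x) (hG1 : ∀ x, G x ≤ 1)
    (hH0 : ∀ x, 0 ≤ H x) (hH1 : ∀ x, H x ≤ 1) : wassCDF G H ≤ 1 := by
  unfold wassCDF
  calc (∫ x in (0:ℝ)..1, |G x - H x|) ≤ ∫ _x in (0:ℝ)..1, (1:ℝ) := by
        apply intervalIntegral.integral_mono_on (by norm_num)
        · exact intervalIntegrable_of_bounded ((hG.sub hH).abs) (C := 1)
            (fun x => by rw [abs_abs, abs_sub_le_iff]
                         constructor <;> [linarith [hG1 x, hH0 x]; linarith [hH1 x, hG0 x]])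
        · exact intervalIntegrable_const
        · intro x _
          rw [abs_sub_le_iff]
          constructor <;> [linarith [hG1 x, hH0 x]; linarith [hH1 x, hG0 x]]
    _ = 1 := by simp

lemma wass_symm (G H : ℝ → ℝ) : wassCDF G H = wassCDF H G := by
  unfold wassCDF
  congr 1; ext x; exact abs_sub_comm _ _

lemma wass_triangle {G H K : ℝ → ℝ} (hG : Measurable G) (hH : Measurable H) (hK : Measurable K)
    (hGb : ∀ x, |G x| ≤ 1) (hHb : ∀ x, |H x| ≤ 1) (hKb : ∀ x, |K x| ≤ 1) :
    wassCDF G H ≤ wassCDF G K + wassCDF K H := by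
  unfold wassCDF
  have i1 : IntervalIntegrable (fun x => |G x - K x|) volume 0 1 :=
    intervalIntegrable_of_bounded ((hG.sub hK).abs) (C := 2)
      (fun x => by rw [abs_abs]; calc |G x - K x| ≤ |G x| + |K x| := abs_sub _ _
                   _ ≤ 2 := by linarith [hGb x, hKb x])
  have i2 : IntervalIntegrable (fun x => |K x - H x|) volume 0 1 :=
    intervalIntegrable_of_bounded ((hK.sub hH).abs) (C := 2)
      (fun x => by rw [abs_abs]; calc |K x - H x| ≤ |K x| + |H x| := abs_sub _ _
                   _ ≤ 2 := by linarith [hKb x, hHb x])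
  calc (∫ x in (0:ℝ)..1, |G x - H x|)
      ≤ ∫ x in (0:ℝ)..1, (|G x - K x| + |K x - H x|) := by
        apply intervalIntegral.integral_mono_on (by norm_num)
        · exact intervalIntegrable_of_bounded ((hG.sub hH).abs) (C := 2)
            (fun x => by rw [abs_abs]; calc |G x - H x| ≤ |G x| + |H x| := abs_sub _ _
                         _ ≤ 2 := by linarith [hGb x, hHb x])
        · exact i1.add i2
        · intro x _
          calc |G x - H x| = |(G x - K x) + (K x - H x)| := by ring_nf
            _ ≤ |G x - K x| + |K x - H x| := abs_add_le _ _
    _ = (∫ x in (0:ℝ)..1, |G x - K x|) + ∫ x in (0:ℝ)..1, |K x - H x| :=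
        intervalIntegral.integral_add i1 i2

lemma ecdf_nonneg' {Ω : Type*} (v : ℕ) (X : Fin v → Ω → ℝ) (ω : Ω) (x : ℝ) :
    0 ≤ ecdfSample v X ω x := by
  unfold ecdfSample
  apply div_nonneg _ (Nat.cast_nonneg v)
  exact Finset.sum_nonneg fun q _ => by positivity

lemma ecdf_le_one' {Ω : Type*} (v : ℕ) (X : Fin v → Ω → ℝ) (ω : Ω) (x : ℝ) :
    ecdfSample v X ω x ≤ 1 := by
  unfold ecdfSample
  rcases Nat.eq_zero_or_pos v with h | h
  · subst h; simp
  rw [div_le_one (by positivity)]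
  calc (∑ q, if X q ω ≤ x then (1:ℝ) else 0) ≤ ∑ _q : Fin v, (1:ℝ) :=
        Finset.sum_le_sum fun q _ => by split <;> norm_num
    _ = v := by simp

variable {α : Type*} [MeasurableSpace α] {μ : Measure α} [IsProbabilityMeasure μ]

lemma measurable_ecdf_a {v : ℕ} {X : Fin v → α → ℝ} (hm : ∀ q, Measurable (X q)) (x : ℝ) :
    Measurable (fun a => ecdfSample v X a x) := by
  unfold ecdfSample
  apply Measurable.div_const
  apply Finset.measurable_sum
  intro q _
  exact Measurable.ite (measurableSet_le (hm q) measurable_const) measurable_const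
    measurable_const

/-- Mean-square / L1 bound for the ECDF at a fixed point `x`. -/
lemma ecdf_L1_bound {v : ℕ} (hv : 0 < v) {X : Fin v → α → ℝ} (hm : ∀ q, Measurable (X q))
    {F : ℝ → ℝ} (hcdf : ∀ q x, (μ {a | X q a ≤ x}).toReal = F x)
    (hind : ∀ q r, q ≠ r → IndepFun (X q) (X r) μ) (x : ℝ) :
    ∫ a, |ecdfSample v X a x - F x| ∂μ ≤ (2 * Real.sqrt v)⁻¹ := by
  set p := F x with hp
  have hq0 : Fin v := ⟨0, hv⟩
  have hp0 : 0 ≤ p := by rw [hp, ← hcdf hq0 x]; exact ENNReal.toReal_nonneg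
  have hp1 : p ≤ 1 := by
    rw [hp, ← hcdf hq0 x]
    exact ENNReal.toReal_le_of_le_ofReal one_pos.le (by simpa using prob_le_one)
  set Z : Fin v → α → ℝ := fun q a => (if X q a ≤ x then (1:ℝ) else 0) - p with hZ
  have hsm : ∀ q, MeasurableSet {a | X q a ≤ x} := fun q =>
    measurableSet_le (hm q) measurable_const
  have hZm : ∀ q, Measurable (Z q) := fun q =>
    (Measurable.ite (hsm q) measurable_const measurable_const).sub measurable_const
  have hZb : ∀ q a, |Z q a| ≤ 1 := by
    intro q a; rw [hZ]; dsimp only; split <;> rw [abs_le] <;> constructor <;> linarith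
  have hZint : ∀ q, Integrable (Z q) μ := fun q =>
    (integrable_const (1:ℝ)).mono' (hZm q).aestronglyMeasurable
      (Filter.Eventually.of_forall fun a => by simpa using hZb q a)
  have hY : ∀ q, (∫ a, (if X q a ≤ x then (1:ℝ) else 0) ∂μ) = p := by
    intro q
    have : (fun a => if X q a ≤ x then (1:ℝ) else 0)
        = Set.indicator {a | X q a ≤ x} (fun _ => (1:ℝ)) := by
      ext a; simp [Set.indicator]
    rw [this, integral_indicator_const _ (hsm q), measureReal_def, hcdf q x]
    simp [hp]
  have hZ0 : ∀ q, (∫ a, Z q a ∂μ) = 0 := by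
    intro q
    rw [hZ]
    simp only
    rw [integral_sub _ (integrable_const p), hY q, integral_const]
    · simp
    · exact ((hZint q).add (integrable_const p)).congr
        (Filter.Eventually.of_forall fun a => by simp [hZ])
  -- cross terms vanish
  have hcross : ∀ q r, q ≠ r → (∫ a, Z q a * Z r a ∂μ) = 0 := by
    intro q r hqr
    set φ : ℝ → ℝ := fun y => (if y ≤ x then (1:ℝ) else 0) - p with hφ
    have hφm : Measurable φ :=
      (Measurable.ite measurableSet_Iic measurable_const measurable_const).sub measurable_const
    have hZeq : ∀ q, Z q = φ ∘ X q := fun q => rfl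
    have hiZ : IndepFun (Z q) (Z r) μ := by
      rw [hZeq q, hZeq r]; exact (hind q r hqr).comp hφm hφm
    have := IndepFun.integral_mul_eq_mul_integral hiZ (hZm q).aestronglyMeasurable (hZm r).aestronglyMeasurable
    calc (∫ a, Z q a * Z r a ∂μ) = ∫ a, (Z q * Z r) a ∂μ := rfl
      _ = (∫ a, Z q a ∂μ) * ∫ a, Z r a ∂μ := this
      _ = 0 := by rw [hZ0 q, hZ0 r]; ring
  -- diagonal terms
  have hdiag : ∀ q, (∫ a, Z q a * Z q a ∂μ) = p - p^2 := by
    intro q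
    have heq : ∀ a, Z q a * Z q a
        = (if X q a ≤ x then (1:ℝ) else 0) * (1 - 2*p) + p^2 := by
      intro a; rw [hZ]; dsimp only; split <;> ring
    rw [integral_congr_ae (Filter.Eventually.of_forall heq)]
    rw [integral_add _ (integrable_const _), integral_mul_const, hY q, integral_const]
    · simp; ring
    · apply Integrable.mul_const
      exact (integrable_const (1:ℝ)).mono'
        (Measurable.ite (hsm q) measurable_const measurable_const).aestronglyMeasurable
        (Filter.Eventually.of_forall fun a => by split <;> simp)
  -- second moment of the sum
  have hZprodint : ∀ q r, Integrable (fun a => Z q a * Z r a) μ := by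
    intro q r
    exact (integrable_const (1:ℝ)).mono' ((hZm q).mul (hZm r)).aestronglyMeasurable
      (Filter.Eventually.of_forall fun a => by
        rw [Real.norm_eq_abs, abs_mul]
        exact mul_le_one₀ (hZb q a) (abs_nonneg _) (hZb r a))
  have hsum2 : (∫ a, (∑ q, Z q a)^2 ∂μ) = v * (p - p^2) := by
    have hexp : ∀ a, (∑ q, Z q a)^2 = ∑ q, ∑ r, Z q a * Z r a := by
      intro a; rw [sq, Finset.sum_mul_sum]
    rw [integral_congr_ae (Filter.Eventually.of_forall hexp)]
    rw [integral_finset_sum _ (fun q _ => integrable_finset_sum _ (fun r _ => hZprodint q r))]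
    have : ∀ q : Fin v, (∫ a, ∑ r, Z q a * Z r a ∂μ) = p - p^2 := by
      intro q
      rw [integral_finset_sum _ (fun r _ => hZprodint q r)]
      have : ∀ r : Fin v, (∫ a, Z q a * Z r a ∂μ) = if r = q then p - p^2 else 0 := by
        intro r
        by_cases h : r = q
        · subst h; simp [hdiag r]
        · simp [h, hcross q r (Ne.symm h)]
      rw [Finset.sum_congr rfl (fun r _ => this r)]
      simp
    rw [Finset.sum_congr rfl (fun q _ => this q)]
    simp [mul_comm]; ring
  -- relate ecdf to the sum
  have hkey : ∀ a, ecdfSample v X a x - p = (∑ q, Z q a) / v := by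
    intro a
    unfold ecdfSample
    rw [hZ]
    have hvne : (v:ℝ) ≠ 0 := Nat.cast_ne_zero.2 hv.ne'
    rw [Finset.sum_sub_distrib]
    simp [Finset.card_univ]
    field_simp
  have hsq : (∫ a, (ecdfSample v X a x - p)^2 ∂μ) = (p - p^2) / v := by
    have : ∀ a, (ecdfSample v X a x - p)^2 = (∑ q, Z q a)^2 / (v^2 : ℝ) := by
      intro a; rw [hkey a]; rw [div_pow]
    rw [integral_congr_ae (Filter.Eventually.of_forall this), integral_div, hsum2]
    have hvne : (v:ℝ) ≠ 0 := Nat.cast_ne_zero.2 hv.ne'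
    field_simp
  -- Cauchy-Schwarz: (∫|f|)² ≤ ∫ f²
  set f : α → ℝ := fun a => ecdfSample v X a x - p with hf
  have hfm : Measurable f := (measurable_ecdf_a hm x).sub measurable_const
  have hfb : ∀ a, |f a| ≤ 1 := by
    intro a
    rw [hf]
    have h1 := ecdf_nonneg' v X a x
    have h2 := ecdf_le_one' v X a x
    rw [abs_le]; constructor <;> dsimp only <;> linarith
  have hfint : Integrable f μ := (integrable_const (1:ℝ)).mono' hfm.aestronglyMeasurable
    (Filter.Eventually.of_forall fun a => by simpa using hfb a)
  have habsint : Integrable (fun a => |f a|) μ := hfint.abs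
  have hf2int : Integrable (fun a => f a ^ 2) μ :=
    (integrable_const (1:ℝ)).mono' ((hfm.pow_const 2)).aestronglyMeasurable
      (Filter.Eventually.of_forall fun a => by
        rw [Real.norm_eq_abs, abs_pow]
        exact pow_le_one₀ (abs_nonneg _) (hfb a))
  set m : ℝ := ∫ a, |f a| ∂μ with hmdef
  have hm0 : 0 ≤ m := integral_nonneg fun a => abs_nonneg _
  have hcs : m^2 ≤ ∫ a, f a ^ 2 ∂μ := by
    have h0 : 0 ≤ ∫ a, (|f a| - m)^2 ∂μ := integral_nonneg fun a => sq_nonneg _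
    have hexp : ∀ a, (|f a| - m)^2 = f a ^ 2 - 2*m*|f a| + m^2 := by
      intro a; rw [sub_sq, sq_abs]; ring
    rw [integral_congr_ae (Filter.Eventually.of_forall hexp)] at h0
    have hsubint : Integrable (fun a => f a ^ 2 - 2*m*|f a|) μ :=
      hf2int.sub (habsint.const_mul (2*m))
    rw [integral_add hsubint (integrable_const _),
        integral_sub hf2int (habsint.const_mul (2*m)), integral_const_mul, ← hmdef,
        integral_const] at h0
    have hμ : μ.real Set.univ = 1 := by simp
    rw [hμ] at h0
    simp only [smul_eq_mul, one_mul] at h0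
    nlinarith
  have hvpos : (0:ℝ) < v := Nat.cast_pos.2 hv
  have hsqv : (0:ℝ) < Real.sqrt v := Real.sqrt_pos.2 hvpos
  have hc2 : ((2 * Real.sqrt v)⁻¹)^2 = ((4:ℝ) * v)⁻¹ := by
    rw [← one_div, div_pow, one_pow, mul_pow, Real.sq_sqrt hvpos.le]
    norm_num
  have hm2 : m^2 ≤ ((4:ℝ) * v)⁻¹ := by
    rw [hsq] at hcs
    calc m^2 ≤ (p - p^2)/v := hcs
      _ ≤ (1/4)/(v:ℝ) := by gcongr <;> nlinarith [sq_nonneg (p - 1/2)]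
      _ = ((4:ℝ) * v)⁻¹ := by field_simp
  have hcpos : (0:ℝ) < (2 * Real.sqrt v)⁻¹ := by positivity
  show m ≤ (2 * Real.sqrt v)⁻¹
  nlinarith [hm2, hc2, hm0, hcpos]

variable {α : Type*} [MeasurableSpace α] {μ : Measure α} [IsProbabilityMeasure μ]

lemma measurable_wass {G H : α → ℝ → ℝ}
    (hG : Measurable fun p : α × ℝ => G p.1 p.2)
    (hH : Measurable fun p : α × ℝ => H p.1 p.2) :
    Measurable fun a => wassCDF (G a) (H a) := by
  unfold wassCDF
  have h : ∀ a, (∫ x in (0:ℝ)..1, |G a x - H a x|)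
      = ∫ x, |G a x - H a x| ∂(volume.restrict (Set.Ioc (0:ℝ) 1)) := fun a =>
    intervalIntegral.integral_of_le zero_le_one
  simp_rw [h]
  exact (StronglyMeasurable.integral_prod_right'
    (f := fun p : α × ℝ => |G p.1 p.2 - H p.1 p.2|)
    ((hG.sub hH).abs).stronglyMeasurable).measurable

lemma wass_integral_swap_bound {G : α → ℝ → ℝ} {F : ℝ → ℝ}
    (hG : Measurable fun p : α × ℝ => G p.1 p.2) (hF : Measurable F)
    (hGb : ∀ a x, |G a x| ≤ 1) (hFb : ∀ x, |F x| ≤ 1)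
    {c : ℝ} (hc : 0 ≤ c)
    (hpt : ∀ x, (∫ a, |G a x - F x| ∂μ) ≤ c) :
    (∫ a, wassCDF (G a) F ∂μ) ≤ c := by
  set ν := volume.restrict (Set.Ioc (0:ℝ) 1) with hν
  have hν1 : ν Set.univ = 1 := by
    rw [hν, Measure.restrict_apply_univ, Real.volume_Ioc]; norm_num
  haveI : IsProbabilityMeasure ν := ⟨hν1⟩
  set g : α → ℝ → ℝ := fun a x => |G a x - F x| with hg
  have hgm : Measurable (Function.uncurry g) :=
    (hG.sub (hF.comp measurable_snd)).abs
  have hgb : ∀ a x, g a x ≤ 2 := by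
    intro a x
    calc |G a x - F x| ≤ |G a x| + |F x| := abs_sub _ _
      _ ≤ 2 := by linarith [hGb a x, hFb x]
  have hgint : Integrable (Function.uncurry g) (μ.prod ν) :=
    (integrable_const (2:ℝ)).mono' hgm.aestronglyMeasurable
      (Filter.Eventually.of_forall fun z => by
        have : |g z.1 z.2| = g z.1 z.2 := abs_of_nonneg (abs_nonneg _)
        simpa [Function.uncurry, Real.norm_eq_abs, this] using hgb z.1 z.2)
  have hwass : ∀ a, wassCDF (G a) F = ∫ x, g a x ∂ν :=
    fun a => intervalIntegral.integral_of_le zero_le_one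
  calc (∫ a, wassCDF (G a) F ∂μ) = ∫ a, ∫ x, g a x ∂ν ∂μ := by
        exact integral_congr_ae (Filter.Eventually.of_forall fun a => hwass a)
    _ = ∫ x, ∫ a, g a x ∂μ ∂ν := integral_integral_swap hgint
    _ ≤ ∫ _x, c ∂ν := by
        apply integral_mono _ (integrable_const c) (fun x => hpt x)
        exact hgint.integral_prod_right
    _ = c := by simp [hν1]

end Aux

section Main
variable {α : Type*} [MeasurableSpace α] {μ : Measure α} [IsProbabilityMeasure μ]

lemma per_t_bound {v1 v2 : ℕ} (hv1 : 0 < v1) (hv2 : 0 < v2)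
    {X1 : Fin v1 → α → ℝ} {X2 : Fin v2 → α → ℝ}
    (hm1 : ∀ q, Measurable (X1 q)) (hm2 : ∀ q, Measurable (X2 q))
    {F1 F2 : ℝ → ℝ} (hF1m : Measurable F1) (hF2m : Measurable F2)
    (hF10 : ∀ x, 0 ≤ F1 x) (hF11 : ∀ x, F1 x ≤ 1)
    (hF20 : ∀ x, 0 ≤ F2 x) (hF21 : ∀ x, F2 x ≤ 1)
    (hcdf1 : ∀ q x, (μ {a | X1 q a ≤ x}).toReal = F1 x)
    (hcdf2 : ∀ q x, (μ {a | X2 q a ≤ x}).toReal = F2 x)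
    (hind1 : ∀ q r, q ≠ r → IndepFun (X1 q) (X1 r) μ)
    (hind2 : ∀ q r, q ≠ r → IndepFun (X2 q) (X2 r) μ) :
    |(∫ a, Real.exp (-(wassCDF (ecdfSample v1 X1 a) (ecdfSample v2 X2 a))) ∂μ) -
        Real.exp (-(wassCDF F1 F2))| ≤
      (∫ a, wassCDF (ecdfSample v1 X1 a) F1 ∂μ) +
        (∫ a, wassCDF (ecdfSample v2 X2 a) F2 ∂μ) ∧
    (∫ a, wassCDF (ecdfSample v1 X1 a) F1 ∂μ) +
        (∫ a, wassCDF (ecdfSample v2 X2 a) F2 ∂μ) ≤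
      (2 * Real.sqrt v1)⁻¹ + (2 * Real.sqrt v2)⁻¹ := by
  set G1 : α → ℝ → ℝ := fun a => ecdfSample v1 X1 a with hG1
  set G2 : α → ℝ → ℝ := fun a => ecdfSample v2 X2 a with hG2
  have hG1j : Measurable fun p : α × ℝ => G1 p.1 p.2 := measurable_ecdf_joint v1 X1 hm1
  have hG2j : Measurable fun p : α × ℝ => G2 p.1 p.2 := measurable_ecdf_joint v2 X2 hm2
  have hG1b : ∀ a x, |G1 a x| ≤ 1 := fun a x => abs_le.2
    ⟨by linarith [ecdf_nonneg v1 X1 a x], ecdf_le_one v1 X1 a x⟩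
  have hG2b : ∀ a x, |G2 a x| ≤ 1 := fun a x => abs_le.2
    ⟨by linarith [ecdf_nonneg v2 X2 a x], ecdf_le_one v2 X2 a x⟩
  have hF1b : ∀ x, |F1 x| ≤ 1 := fun x => abs_le.2 ⟨by linarith [hF10 x], hF11 x⟩
  have hF2b : ∀ x, |F2 x| ≤ 1 := fun x => abs_le.2 ⟨by linarith [hF20 x], hF21 x⟩
  have hG1m : ∀ a, Measurable (G1 a) := fun a => measurable_ecdf_x v1 X1 a
  have hG2m : ∀ a, Measurable (G2 a) := fun a => measurable_ecdf_x v2 X2 a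
  -- second part
  have part2a : (∫ a, wassCDF (G1 a) F1 ∂μ) ≤ (2 * Real.sqrt v1)⁻¹ :=
    wass_integral_swap_bound hG1j hF1m hG1b hF1b (by positivity)
      (fun x => ecdf_L1_bound hv1 hm1 hcdf1 hind1 x)
  have part2b : (∫ a, wassCDF (G2 a) F2 ∂μ) ≤ (2 * Real.sqrt v2)⁻¹ :=
    wass_integral_swap_bound hG2j hF2m hG2b hF2b (by positivity)
      (fun x => ecdf_L1_bound hv2 hm2 hcdf2 hind2 x)
  refine ⟨?_, add_le_add part2a part2b⟩
  -- first part
  set A : α → ℝ := fun a => wassCDF (G1 a) F1 with hA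
  set B : α → ℝ := fun a => wassCDF (G2 a) F2 with hB
  set e : ℝ := Real.exp (-(wassCDF F1 F2)) with he
  set S : α → ℝ := fun a => Real.exp (-(wassCDF (G1 a) (G2 a))) with hS
  have hpt : ∀ a, |S a - e| ≤ A a + B a := by
    intro a
    have h1 : |S a - e| ≤ |wassCDF (G1 a) (G2 a) - wassCDF F1 F2| :=
      abs_exp_neg_sub_exp_neg (wass_nonneg _ _) (wass_nonneg _ _)
    have t1 : wassCDF (G1 a) (G2 a) ≤ A a + (wassCDF F1 F2 + B a) := by
      calc wassCDF (G1 a) (G2 a) ≤ wassCDF (G1 a) F1 + wassCDF F1 (G2 a) :=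
            wass_triangle (hG1m a) (hG2m a) hF1m (hG1b a) (hG2b a) hF1b
        _ ≤ wassCDF (G1 a) F1 + (wassCDF F1 F2 + wassCDF F2 (G2 a)) := by
            have := wass_triangle hF1m (hG2m a) hF2m hF1b (hG2b a) hF2b
            linarith
        _ = A a + (wassCDF F1 F2 + B a) := by rw [wass_symm F2 (G2 a)]
    have t2 : wassCDF F1 F2 ≤ A a + (wassCDF (G1 a) (G2 a) + B a) := by
      calc wassCDF F1 F2 ≤ wassCDF F1 (G1 a) + wassCDF (G1 a) F2 :=
            wass_triangle hF1m hF2m (hG1m a) hF1b hF2b (hG1b a)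
        _ ≤ wassCDF F1 (G1 a) + (wassCDF (G1 a) (G2 a) + wassCDF (G2 a) F2) := by
            have := wass_triangle (hG1m a) hF2m (hG2m a) (hG1b a) hF2b (hG2b a)
            linarith
        _ = A a + (wassCDF (G1 a) (G2 a) + B a) := by rw [wass_symm F1 (G1 a)]
    have h2 : |wassCDF (G1 a) (G2 a) - wassCDF F1 F2| ≤ A a + B a := by
      rw [abs_sub_le_iff]; constructor <;> linarith
    linarith
  have hAm : Measurable A := measurable_wass hG1j (hF1m.comp measurable_snd)
  have hBm : Measurable B := measurable_wass hG2j (hF2m.comp measurable_snd)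
  have hSm : Measurable S := by
    apply Measurable.exp
    exact (measurable_wass hG1j hG2j).neg
  have hAint : Integrable A μ := (integrable_const (1:ℝ)).mono' hAm.aestronglyMeasurable
    (Filter.Eventually.of_forall fun a => by
      rw [Real.norm_eq_abs, abs_of_nonneg (wass_nonneg _ _)]
      exact wass_le_one (hG1m a) hF1m (fun x => ecdf_nonneg v1 X1 a x)
        (fun x => ecdf_le_one v1 X1 a x) hF10 hF11)
  have hBint : Integrable B μ := (integrable_const (1:ℝ)).mono' hBm.aestronglyMeasurable
    (Filter.Eventually.of_forall fun a => by
      rw [Real.norm_eq_abs, abs_of_nonneg (wass_nonneg _ _)]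
      exact wass_le_one (hG2m a) hF2m (fun x => ecdf_nonneg v2 X2 a x)
        (fun x => ecdf_le_one v2 X2 a x) hF20 hF21)
  have hSint : Integrable S μ := (integrable_const (1:ℝ)).mono' hSm.aestronglyMeasurable
    (Filter.Eventually.of_forall fun a => by
      rw [Real.norm_eq_abs, abs_of_nonneg (Real.exp_pos _).le]
      exact Real.exp_le_one_iff.2 (by linarith [wass_nonneg (G1 a) (G2 a)]))
  calc |(∫ a, S a ∂μ) - e| = |∫ a, (S a - e) ∂μ| := by
        rw [integral_sub hSint (integrable_const e), integral_const]
        simp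
    _ ≤ ∫ a, |S a - e| ∂μ := by
        simpa [Real.norm_eq_abs] using
          norm_integral_le_integral_norm (μ := μ) (f := fun a => S a - e)
    _ ≤ ∫ a, (A a + B a) ∂μ := by
        apply integral_mono ((hSint.sub (integrable_const e)).abs) (hAint.add hBint) hpt
    _ = (∫ a, A a ∂μ) + ∫ a, B a ∂μ := integral_add hAint hBint

end Main

/-- with `S(i,j) = exp(−W(F̂_i, F̂_j))` built from ECDFs of independent
i.i.d. samples of sizes `v_i, v_j` from `F_i, F_j`,
`|E[S(i,j)] − exp(−W(F_i,F_j))| ≤ E[W(F̂_i,F_i)] + E[W(F̂_j,F_j)] ≤ (2√v_i)⁻¹ + (2√v_j)⁻¹`;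
in particular `E[S(i,j)] → exp(−W(F_i,F_j))` as `min(v_i,v_j) → ∞`, and if `F_i = F_j`
then `E[S(i,j)] → 1`.  (The samples are indexed by a parameter `t` along which the sample
sizes may grow.) -/
theorem expected_similarity_convergence
    (Ω : ℕ → Type) [mΩ : ∀ t, MeasurableSpace (Ω t)]
    (P : ∀ t, Measure (Ω t)) (hP : ∀ t, IsProbabilityMeasure (P t))
    (vi vj : ℕ → ℕ) (hvi : ∀ t, 0 < vi t) (hvj : ∀ t, 0 < vj t)
    (Fi Fj : ℝ → ℝ)
    (Xi : ∀ t, Fin (vi t) → Ω t → ℝ) (Xj : ∀ t, Fin (vj t) → Ω t → ℝ)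
    (hmi : ∀ t q, Measurable (Xi t q)) (hmj : ∀ t q, Measurable (Xj t q))
    (hri : ∀ t q, ∀ᵐ ω ∂(P t), Xi t q ω ∈ Set.Icc (0 : ℝ) 1)
    (hrj : ∀ t q, ∀ᵐ ω ∂(P t), Xj t q ω ∈ Set.Icc (0 : ℝ) 1)
    (hcdfi : ∀ t (q : Fin (vi t)) (x : ℝ), ((P t) {ω | Xi t q ω ≤ x}).toReal = Fi x)
    (hcdfj : ∀ t (q : Fin (vj t)) (x : ℝ), ((P t) {ω | Xj t q ω ≤ x}).toReal = Fj x)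
    (hindep : ∀ t, iIndepFun
      (Sum.elim (fun q => Xi t q) (fun q => Xj t q) : Fin (vi t) ⊕ Fin (vj t) → Ω t → ℝ)
      (P t)) :
    (∀ t,
      |(∫ ω, Real.exp (-(wassCDF (ecdfSample (vi t) (Xi t) ω)
              (ecdfSample (vj t) (Xj t) ω))) ∂(P t)) -
          Real.exp (-(wassCDF Fi Fj))| ≤
        (∫ ω, wassCDF (ecdfSample (vi t) (Xi t) ω) Fi ∂(P t)) +
          (∫ ω, wassCDF (ecdfSample (vj t) (Xj t) ω) Fj ∂(P t)) ∧
      (∫ ω, wassCDF (ecdfSample (vi t) (Xi t) ω) Fi ∂(P t)) +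
          (∫ ω, wassCDF (ecdfSample (vj t) (Xj t) ω) Fj ∂(P t)) ≤
        (2 * Real.sqrt (vi t))⁻¹ + (2 * Real.sqrt (vj t))⁻¹) ∧
    (Tendsto (fun t => min (vi t) (vj t)) atTop atTop →
      Tendsto (fun t => ∫ ω, Real.exp (-(wassCDF (ecdfSample (vi t) (Xi t) ω)
          (ecdfSample (vj t) (Xj t) ω))) ∂(P t)) atTop
        (nhds (Real.exp (-(wassCDF Fi Fj))))) ∧
    (Fi = Fj → Tendsto (fun t => min (vi t) (vj t)) atTop atTop →
      Tendsto (fun t => ∫ ω, Real.exp (-(wassCDF (ecdfSample (vi t) (Xi t) ω)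
          (ecdfSample (vj t) (Xj t) ω))) ∂(P t)) atTop (nhds 1)) := by
  haveI := hP
  -- basic facts about Fi, Fj
  have hFi0 : ∀ x, 0 ≤ Fi x := fun x => by
    rw [← hcdfi 0 ⟨0, hvi 0⟩ x]; exact ENNReal.toReal_nonneg
  have hFj0 : ∀ x, 0 ≤ Fj x := fun x => by
    rw [← hcdfj 0 ⟨0, hvj 0⟩ x]; exact ENNReal.toReal_nonneg
  have hFi1 : ∀ x, Fi x ≤ 1 := fun x => by
    rw [← hcdfi 0 ⟨0, hvi 0⟩ x]
    exact ENNReal.toReal_le_of_le_ofReal zero_le_one (by simpa using prob_le_one)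
  have hFj1 : ∀ x, Fj x ≤ 1 := fun x => by
    rw [← hcdfj 0 ⟨0, hvj 0⟩ x]
    exact ENNReal.toReal_le_of_le_ofReal zero_le_one (by simpa using prob_le_one)
  have hFim : Measurable Fi := by
    apply Monotone.measurable
    intro x y hxy
    rw [← hcdfi 0 ⟨0, hvi 0⟩ x, ← hcdfi 0 ⟨0, hvi 0⟩ y]
    exact ENNReal.toReal_mono (measure_ne_top _ _)
      (measure_mono fun a ha => le_trans ha hxy)
  have hFjm : Measurable Fj := by
    apply Monotone.measurable
    intro x y hxy
    rw [← hcdfj 0 ⟨0, hvj 0⟩ x, ← hcdfj 0 ⟨0, hvj 0⟩ y]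
    exact ENNReal.toReal_mono (measure_ne_top _ _)
      (measure_mono fun a ha => le_trans ha hxy)
  -- pairwise independence within each sample
  have hind1 : ∀ t, ∀ q r : Fin (vi t), q ≠ r → IndepFun (Xi t q) (Xi t r) (P t) := by
    intro t q r hqr
    have := (hindep t).indepFun
      (show (Sum.inl q : Fin (vi t) ⊕ Fin (vj t)) ≠ Sum.inl r by simpa using hqr)
    exact this
  have hind2 : ∀ t, ∀ q r : Fin (vj t), q ≠ r → IndepFun (Xj t q) (Xj t r) (P t) := by
    intro t q r hqr
    have := (hindep t).indepFun
      (show (Sum.inr q : Fin (vi t) ⊕ Fin (vj t)) ≠ Sum.inr r by simpa using hqr)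
    exact this
  have key : ∀ t, _ ∧ _ := fun t =>
    per_t_bound (μ := P t) (hvi t) (hvj t) (hmi t) (hmj t) hFim hFjm
      hFi0 hFi1 hFj0 hFj1 (hcdfi t) (hcdfj t) (hind1 t) (hind2 t)
  have conv : Tendsto (fun t => min (vi t) (vj t)) atTop atTop →
      Tendsto (fun t => ∫ ω, Real.exp (-(wassCDF (ecdfSample (vi t) (Xi t) ω)
          (ecdfSample (vj t) (Xj t) ω))) ∂(P t)) atTop
        (nhds (Real.exp (-(wassCDF Fi Fj)))) := by
    intro hmin
    have hvi_top : Tendsto (fun t => vi t) atTop atTop :=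
      tendsto_atTop_mono (fun t => min_le_left _ _) hmin
    have hvj_top : Tendsto (fun t => vj t) atTop atTop :=
      tendsto_atTop_mono (fun t => min_le_right _ _) hmin
    have sqrt4 : Real.sqrt 4 = 2 := by
      rw [show (4:ℝ) = 2^2 by norm_num, Real.sqrt_sq (by norm_num : (0:ℝ) ≤ 2)]
    have hcv : ∀ (v : ℕ → ℕ), Tendsto (fun t => v t) atTop atTop →
        Tendsto (fun t => (2 * Real.sqrt (v t))⁻¹) atTop (nhds 0) := by
      intro v hv
      have h4 : Tendsto (fun t => ((4:ℝ) * v t)) atTop atTop := by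
        apply Tendsto.const_mul_atTop (by norm_num : (0:ℝ) < 4)
        exact tendsto_natCast_atTop_atTop.comp hv
      have hinv : Tendsto (fun t => ((4:ℝ) * v t)⁻¹) atTop (nhds 0) :=
        h4.inv_tendsto_atTop
      have heq : ∀ t, (2 * Real.sqrt (v t))⁻¹ = Real.sqrt (((4:ℝ) * v t)⁻¹) := by
        intro t
        rw [Real.sqrt_inv, Real.sqrt_mul (by norm_num : (0:ℝ) ≤ 4), sqrt4]
      simp_rw [heq]
      have h2 : Tendsto (fun t => Real.sqrt (((4:ℝ) * v t)⁻¹)) atTop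
          (nhds (Real.sqrt 0)) := (Real.continuous_sqrt.tendsto 0).comp hinv
      rwa [Real.sqrt_zero] at h2
    have hc : Tendsto (fun t => (2 * Real.sqrt (vi t))⁻¹ + (2 * Real.sqrt (vj t))⁻¹)
        atTop (nhds 0) := by
      simpa using (hcv vi hvi_top).add (hcv vj hvj_top)
    rw [tendsto_iff_norm_sub_tendsto_zero]
    exact squeeze_zero (fun t => norm_nonneg _)
      (fun t => by simpa only [Real.norm_eq_abs] using le_trans (key t).1 (key t).2) hc
  refine ⟨key, conv, ?_⟩
  intro hFF hmin
  have h1 : Real.exp (-(wassCDF Fi Fj)) = 1 := by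
    rw [hFF]
    have h0 : wassCDF Fj Fj = 0 := by
      unfold wassCDF; simp
    rw [h0]; simp
  rw [← h1]
  exact conv hmin
end
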